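/- Let · be a cycle set operation on A with automorphism α_A (a bijection of A with α_A(a·a') = α_A(a)·α_A(a')), and ⋆ a cycle set operation on B with automorphism α_B. Define an operation ∘ on the disjoint union A ⊔ B by: a ∘ a' = a·a' for a, a' ∈ A; a ∘ b = α_B(b) for a ∈ A, b ∈ B; b ∘ a = α_A(a) for b ∈ B, a ∈ A; b ∘ b' = b⋆b' for b, b' ∈ B. Then ∘ is a cycle set operation on A ⊔ B; moreover, if · and ⋆ are nondegenerate then ∘ is nondegenerate. -/

import Mathlib

def IsCycleSet {X : Type*} (op : X → X → X) : Prop :=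
  (∀ x, Function.Bijective fun y => op x y) ∧
  ∀ x y z, op (op x y) (op x z) = op (op y x) (op y z)

def IsNondegenerate {X : Type*} (op : X → X → X) : Prop :=
  Function.Bijective fun x => op x x

/-- Glueing two cycle sets along automorphisms:
`a ∘ a' = a·a'`, `a ∘ b = α_B b`, `b ∘ a = α_A a`, `b ∘ b' = b⋆b'`. -/
def glueOp {A B : Type*} (opA : A → A → A) (opB : B → B → B)
    (αA : Equiv.Perm A) (αB : Equiv.Perm B) : A ⊕ B → A ⊕ B → A ⊕ B
  | Sum.inl a, Sum.inl a' => Sum.inl (opA a a')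
  | Sum.inl _, Sum.inr b => Sum.inr (αB b)
  | Sum.inr _, Sum.inl a => Sum.inl (αA a)
  | Sum.inr b, Sum.inr b' => Sum.inr (opB b b')

/-- The glueing of two cycle sets along automorphisms is a cycle set; it is
nondegenerate if both pieces are. -/
theorem glueOp_is_cycle_set {A B : Type*} (opA : A → A → A) (opB : B → B → B)
    (hA : IsCycleSet opA) (hB : IsCycleSet opB)
    (αA : Equiv.Perm A) (hαA : ∀ a a', αA (opA a a') = opA (αA a) (αA a'))
    (αB : Equiv.Perm B) (hαB : ∀ b b', αB (opB b b') = opB (αB b) (αB b')) :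
    IsCycleSet (glueOp opA opB αA αB) ∧
    (IsNondegenerate opA → IsNondegenerate opB →
      IsNondegenerate (glueOp opA opB αA αB)) := by
  constructor
  · constructor
    · rintro (a | b)
      · have : (fun y => glueOp opA opB αA αB (Sum.inl a) y)
            = Sum.map (fun a' => opA a a') αB := by
          funext y; cases y <;> rfl
        rw [this]
        exact Function.Bijective.sumMap (hA.1 a) αB.bijective
      · have : (fun y => glueOp opA opB αA αB (Sum.inr b) y)
            = Sum.map αA (fun b' => opB b b') := by
          funext y; cases y <;> rfl
        rw [this]
        exact Function.Bijective.sumMap αA.bijective (hB.1 b)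
    · rintro (a | b) (a' | b') (a'' | b'') <;>
        simp only [glueOp] <;>
        first
          | rw [hA.2]
          | rw [hB.2]
          | rw [hαA]
          | rw [hαB]
  · intro hNA hNB
    have : (fun x => glueOp opA opB αA αB x x)
        = Sum.map (fun a => opA a a) (fun b => opB b b) := by
      funext x; cases x <;> rfl
    rw [IsNondegenerate, this]
    exact Function.Bijective.sumMap hNA hNB
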